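/- Let $w$ be a set, $F \subseteq 2^w$, $j \in w$, and $v \subseteq w \setminus \{j\}$ finite. If there exist $f_0, f_1 \in F$ with $f_0\restriction v = f_1\restriction v$, $f_0(j) = 0$, and $f_1(j) = 1$, then in the algebra $\mathbb{B}_{(w,F)}$ the element $x_j$ does not belong to the subalgebra generated by $\{x_i : i \in v\}$. -/

import Mathlib

variable {α : Type*} [BooleanAlgebra α]

/-- Membership in the Boolean subalgebra generated by `X`. -/
inductive BooleanGen (X : Set α) : α → Prop
  | base {a : α} : a ∈ X → BooleanGen X a
  | bot : BooleanGen X ⊥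
  | top : BooleanGen X ⊤
  | sup {a b : α} : BooleanGen X a → BooleanGen X b → BooleanGen X (a ⊔ b)
  | inf {a b : α} : BooleanGen X a → BooleanGen X b → BooleanGen X (a ⊓ b)
  | compl {a : α} : BooleanGen X a → BooleanGen X aᶜ

/-- The Boolean subalgebra generated by `X`, as a set. -/
def genBA (X : Set α) : Set α := {a | BooleanGen X a}

namespace genBA
variable {X : Set α}

instance : Max ↥(genBA X) := ⟨fun a b => ⟨a.1 ⊔ b.1, BooleanGen.sup a.2 b.2⟩⟩
instance : Min ↥(genBA X) := ⟨fun a b => ⟨a.1 ⊓ b.1, BooleanGen.inf a.2 b.2⟩⟩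
instance : Top ↥(genBA X) := ⟨⟨⊤, BooleanGen.top⟩⟩
instance : Bot ↥(genBA X) := ⟨⟨⊥, BooleanGen.bot⟩⟩
instance : Compl ↥(genBA X) := ⟨fun a => ⟨a.1ᶜ, BooleanGen.compl a.2⟩⟩
instance : SDiff ↥(genBA X) := ⟨fun a b => ⟨a.1 ⊓ b.1ᶜ, BooleanGen.inf a.2 (BooleanGen.compl b.2)⟩⟩
instance : HImp ↥(genBA X) := ⟨fun a b => ⟨a.1ᶜ ⊔ b.1, BooleanGen.sup (BooleanGen.compl a.2) b.2⟩⟩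

lemma coe_sdiff (a b : ↥(genBA X)) : ((a \ b : ↥(genBA X)) : α) = (a : α) \ (b : α) := by
  rw [sdiff_eq]; rfl

lemma coe_himp (a b : ↥(genBA X)) : ((a ⇨ b : ↥(genBA X)) : α) = (a : α) ⇨ (b : α) := by
  rw [himp_eq, sup_comm]; rfl

instance : BooleanAlgebra ↥(genBA X) :=
  Subtype.coe_injective.booleanAlgebra _ Iff.rfl Iff.rfl (fun _ _ => rfl) (fun _ _ => rfl) rfl rfl
    (fun _ => rfl) coe_sdiff coe_himp

end genBA

/-- The generator `x_i` of the algebra `B_(w,F)`, realized as a function on `F`. -/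
def xgen {w : Type*} (F : Set (w → Bool)) (i : w) : ↥F → Bool := fun f => f.1 i

/-- The algebra `B_(w,F)` of Definition 0.C, realized concretely as the Boolean
subalgebra of `F → Bool` generated by the evaluation functions `x_i`. -/
abbrev BwF (w : Type*) (F : Set (w → Bool)) : Set (↥F → Bool) :=
  genBA (Set.range (xgen F))

lemma xgen_mem {w : Type*} {F : Set (w → Bool)} (i : w) : xgen F i ∈ BwF w F :=
  BooleanGen.base ⟨i, rfl⟩

/-- The closure `cl(F)` of a family `F ⊆ 2^w`. -/
def clF {w : Type*} (F : Set (w → Bool)) : Set (w → Bool) :=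
  {g | ∀ u : Finset w, ∃ f ∈ F, ∀ x ∈ u, f x = g x}


/-- If `v ⊆ w \ {j}` is finite and there are `f₀, f₁ ∈ F` agreeing on `v` with
`f₀(j) = 0` and `f₁(j) = 1`, then in `B_(w,F)` the element `x_j` does not belong to
the subalgebra generated by `{x_i : i ∈ v}`. -/
theorem xgen_not_mem_of_split {w : Type*} (F : Set (w → Bool)) (j : w) (v : Set w)
    (hvfin : v.Finite) (hjv : j ∉ v)
    (f₀ f₁ : w → Bool) (hf₀ : f₀ ∈ F) (hf₁ : f₁ ∈ F)
    (hagree : ∀ i ∈ v, f₀ i = f₁ i) (h₀ : f₀ j = false) (h₁ : f₁ j = true) :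
    xgen F j ∉ genBA {g | ∃ i ∈ v, g = xgen F i} := by
  intro hmem
  have key : ∀ a : ↥F → Bool, BooleanGen {g | ∃ i ∈ v, g = xgen F i} a →
      a ⟨f₀, hf₀⟩ = a ⟨f₁, hf₁⟩ := by
    intro a ha
    induction ha with
    | base h => obtain ⟨i, hi, rfl⟩ := h; exact hagree i hi
    | bot => rfl
    | top => rfl
    | sup _ _ ih1 ih2 => simp only [Pi.sup_apply, ih1, ih2]
    | inf _ _ ih1 ih2 => simp only [Pi.inf_apply, ih1, ih2]
    | compl _ ih => simp only [Pi.compl_apply, ih]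
  have := key _ hmem
  simp only [xgen, h₀, h₁] at this
  exact Bool.false_ne_true this
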